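/- There exists a universal constant C > 0 such that for all integers n, W ≥ 1 and every real λ ≥ 0, P_{∞,W,n}(min C_π(0) < −λ − 2W) ≤ C·W²·P_{∞,W,n}(min C_π(0) ∈ [−λ − 2W, −λ)). -/

import Mathlib

open Finset

/-- The integer interval `[-n, n]`, as a type. -/
abbrev Box (n : ℕ) : Type := {x : ℤ // x ∈ Finset.Icc (-(n : ℤ)) (n : ℤ)}

/-- The point `0 ∈ [-n, n]`. -/
def boxZero (n : ℕ) : Box n :=
  ⟨0, by simp⟩

/-- The maximum of the cycle of `j` under `π`, i.e. `max C_π(j)` where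
`C_π(j) = {π^k(j) : k ∈ ℤ}`. -/
noncomputable def maxCycle {n : ℕ} (π : Equiv.Perm (Box n)) (j : Box n) : ℤ :=
  sSup {x : ℤ | ∃ k : ℤ, (((π ^ k) j : Box n) : ℤ) = x}

/-- The minimum of the cycle of `j` under `π`. -/
noncomputable def minCycle {n : ℕ} (π : Equiv.Perm (Box n)) (j : Box n) : ℤ :=
  sInf {x : ℤ | ∃ k : ℤ, (((π ^ k) j : Box n) : ℤ) = x}

/-- The diameter of the cycle of `j` under `π`. -/
noncomputable def diamCycle {n : ℕ} (π : Equiv.Perm (Box n)) (j : Box n) : ℤ :=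
  maxCycle π j - minCycle π j

/-- The Boltzmann–Gibbs weight `exp(-W^{-p} Σ_i |π(i) - i|^p)`. -/
noncomputable def gibbsWeight (p : ℝ) (W n : ℕ) (π : Equiv.Perm (Box n)) : ℝ :=
  Real.exp (-(W : ℝ) ^ (-p) * ∑ i : Box n, |((π i : ℤ) : ℝ) - ((i : ℤ) : ℝ)| ^ p)

open scoped Classical in
/-- The probability of the event `E` under the Gibbs measure `P_{p,W,n}`. -/
noncomputable def gibbsProb (p : ℝ) (W n : ℕ) (E : Set (Equiv.Perm (Box n))) : ℝ :=
  (∑ π : Equiv.Perm (Box n), if π ∈ E then gibbsWeight p W n π else 0) /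
    ∑ π : Equiv.Perm (Box n), gibbsWeight p W n π

/-- The probability of a single permutation under the Gibbs measure `P_{p,W,n}`. -/
noncomputable def gibbsP (p : ℝ) (W n : ℕ) (π : Equiv.Perm (Box n)) : ℝ :=
  gibbsWeight p W n π / ∑ σ : Equiv.Perm (Box n), gibbsWeight p W n σ

/-- The set `S_W` of permutations displacing each point by at most `W`. -/
def SW (n W : ℕ) : Set (Equiv.Perm (Box n)) :=
  {π | ∀ i : Box n, |(π i : ℤ) - (i : ℤ)| ≤ (W : ℤ)}

open scoped Classical in
/-- The probability of the event `E` under the uniform measure `P_{∞,W,n}` on `S_W`. -/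
noncomputable def unifProb (W n : ℕ) (E : Set (Equiv.Perm (Box n))) : ℝ :=
  ((Finset.univ.filter fun π : Equiv.Perm (Box n) => π ∈ SW n W ∧ π ∈ E).card : ℝ) /
    ((Finset.univ.filter fun π : Equiv.Perm (Box n) => π ∈ SW n W).card : ℝ)

/-- `Period(π, j)`: the least positive `m` with `π^m(j) = j`. -/
noncomputable def permPeriod {n : ℕ} (π : Equiv.Perm (Box n)) (j : Box n) : ℕ :=
  sInf {m : ℕ | 0 < m ∧ (π ^ m) j = j}

/-- `i_first(π)` for the threshold `t`. -/
noncomputable def iFirst {n : ℕ} (t : ℝ) (π : Equiv.Perm (Box n)) : ℕ :=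
  sInf {j : ℕ | ((((π ^ j) (boxZero n) : Box n) : ℤ) : ℝ) ≤ t ∧
    t < ((((π ^ (j + 1)) (boxZero n) : Box n) : ℤ) : ℝ)}

/-- `i_last(π)` for the threshold `t`. -/
noncomputable def iLast {n : ℕ} (t : ℝ) (π : Equiv.Perm (Box n)) : ℕ :=
  sSup {j : ℕ | j < permPeriod π (boxZero n) ∧
    ((((π ^ (j + 1)) (boxZero n) : Box n) : ℤ) : ℝ) ≤ t ∧
    t < ((((π ^ j) (boxZero n) : Box n) : ℤ) : ℝ)}

/-- The uncrossing map `Φ_t(π) = π ∘ (π^{i_first+1}(0)  π^{i_last+1}(0))`. -/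
noncomputable def Phi {n : ℕ} (t : ℝ) (π : Equiv.Perm (Box n)) : Equiv.Perm (Box n) :=
  π * Equiv.swap ((π ^ (iFirst t π + 1)) (boxZero n)) ((π ^ (iLast t π + 1)) (boxZero n))


namespace OneStepAux

variable {n : ℕ}

/-- The orbit of `0` under `π`, indexed by naturals. -/
noncomputable def cc (π : Equiv.Perm (Box n)) (k : ℕ) : Box n := (⇑π)^[k] (boxZero n)

/-- Real value of the `k`-th orbit point. -/
noncomputable def ff (π : Equiv.Perm (Box n)) (k : ℕ) : ℝ := ((cc π k : ℤ) : ℝ)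

/-- Minimal period of `0` under `π`. -/
noncomputable def LL (π : Equiv.Perm (Box n)) : ℕ := Function.minimalPeriod ⇑π (boxZero n)

noncomputable def ii (W : ℕ) (lam : ℝ) (π : Equiv.Perm (Box n)) : ℕ :=
  sInf {k : ℕ | ff π (k + 1) ≤ -lam - W - 1}

noncomputable def jj (W : ℕ) (lam : ℝ) (π : Equiv.Perm (Box n)) : ℕ :=
  sSup {k : ℕ | k ≤ ii W lam π + LL π ∧ ff π k ≤ -lam - W - 1}

noncomputable def aa (W : ℕ) (lam : ℝ) (π : Equiv.Perm (Box n)) : Box n := cc π (ii W lam π)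

noncomputable def bbb (W : ℕ) (lam : ℝ) (π : Equiv.Perm (Box n)) : Box n := cc π (jj W lam π)

noncomputable def Psi (W : ℕ) (lam : ℝ) (π : Equiv.Perm (Box n)) : Equiv.Perm (Box n) :=
  π * Equiv.swap (aa W lam π) (bbb W lam π)

lemma cc_zero (π : Equiv.Perm (Box n)) : cc π 0 = boxZero n := rfl

lemma cc_succ (π : Equiv.Perm (Box n)) (k : ℕ) : cc π (k + 1) = π (cc π k) :=
  Function.iterate_succ_apply' _ _ _

lemma cc_pow (π : Equiv.Perm (Box n)) (k : ℕ) : (π ^ k) (boxZero n) = cc π k := by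
  rw [cc, Equiv.Perm.coe_pow]

lemma ff_zero (π : Equiv.Perm (Box n)) : ff π 0 = 0 := by
  simp [ff, cc_zero, boxZero]

lemma cc_add_LL (π : Equiv.Perm (Box n)) (k : ℕ) : cc π (k + LL π) = cc π k :=
  Function.iterate_add_minimalPeriod_eq

lemma LL_pos (π : Equiv.Perm (Box n)) : 0 < LL π := by
  have h : Function.IsPeriodicPt ⇑π (orderOf π) (boxZero n) := by
    show (⇑π)^[orderOf π] (boxZero n) = boxZero n
    rw [← Equiv.Perm.coe_pow, pow_orderOf_eq_one]; rfl
  exact h.minimalPeriod_pos (orderOf_pos π)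

lemma cc_mod (π : Equiv.Perm (Box n)) (k : ℕ) : cc π (k % LL π) = cc π k :=
  Function.iterate_mod_minimalPeriod_eq

lemma cc_eq_of (π : Equiv.Perm (Box n)) {k r : ℕ} (hr : r < LL π) (h : cc π k = cc π r) :
    k % LL π = r := by
  have h1 : cc π (k % LL π) = cc π r := by rw [cc_mod]; exact h
  exact Function.iterate_injOn_Iio_minimalPeriod
    (Set.mem_Iio.mpr (Nat.mod_lt _ (LL_pos π))) (Set.mem_Iio.mpr hr) h1

lemma box_lb (x : Box n) : -(n : ℤ) ≤ (x : ℤ) := (Finset.mem_Icc.mp x.2).1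

lemma minCycle_le (σ : Equiv.Perm (Box n)) (k : ℕ) :
    minCycle σ (boxZero n) ≤ (cc σ k : ℤ) := by
  apply csInf_le
  · exact ⟨-(n : ℤ), by rintro x ⟨m, rfl⟩; exact box_lb _⟩
  · exact ⟨(k : ℤ), by rw [zpow_natCast, cc_pow]⟩

lemma minCycle_mem (σ : Equiv.Perm (Box n)) :
    ∃ k : ℕ, ((cc σ k : ℤ)) = minCycle σ (boxZero n) := by
  have hne : Set.Nonempty {x : ℤ | ∃ k : ℤ, (((σ ^ k) (boxZero n) : Box n) : ℤ) = x} :=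
    ⟨_, 0, rfl⟩
  have hbdd : BddBelow {x : ℤ | ∃ k : ℤ, (((σ ^ k) (boxZero n) : Box n) : ℤ) = x} :=
    ⟨-(n : ℤ), by rintro x ⟨m, rfl⟩; exact box_lb _⟩
  obtain ⟨k, hk⟩ := Int.csInf_mem hne hbdd
  refine ⟨(k % (orderOf σ : ℤ)).toNat, ?_⟩
  have hord : (0 : ℤ) < (orderOf σ : ℤ) := by exact_mod_cast orderOf_pos σ
  have h1 : σ ^ (((k % (orderOf σ : ℤ)).toNat : ℕ)) = σ ^ k := by
    rw [← zpow_natCast, Int.toNat_of_nonneg (Int.emod_nonneg k hord.ne')]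
    exact zpow_mod_orderOf σ k
  rw [minCycle, ← hk, ← cc_pow, h1]

theorem main (W : ℕ) (hW : 1 ≤ W) (lam : ℝ) (hlam : 0 ≤ lam) (π : Equiv.Perm (Box n))
    (hSW : π ∈ SW n W)
    (hA : ((minCycle π (boxZero n) : ℤ) : ℝ) < -lam - 2 * W) :
    Psi W lam π ∈ SW n W ∧
    (-lam - 2 * W ≤ ((minCycle (Psi W lam π) (boxZero n) : ℤ) : ℝ) ∧
      ((minCycle (Psi W lam π) (boxZero n) : ℤ) : ℝ) < -lam) ∧
    ((aa W lam π : ℤ) ∈ Finset.Ioc ⌊-lam - (W : ℝ) - 1⌋ (⌊-lam - (W : ℝ) - 1⌋ + W)) ∧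
    ((bbb W lam π : ℤ) ∈ Finset.Ioc (⌊-lam - (W : ℝ) - 1⌋ - W) ⌊-lam - (W : ℝ) - 1⌋) := by
  have hW1 : (1 : ℝ) ≤ (W : ℝ) := by exact_mod_cast hW
  -- threshold
  set t : ℝ := -lam - W - 1 with htdef
  have ht0 : t < 0 := by rw [htdef]; linarith
  have ht2 : -lam - 2 * W ≤ t := by rw [htdef]; linarith
  -- step bound
  have hstep : ∀ k, |ff π (k + 1) - ff π k| ≤ (W : ℝ) := by
    intro k
    have h := hSW (cc π k)
    rw [ff, ff, cc_succ]
    exact_mod_cast h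
  -- existence of a point below t
  have hSne : {k : ℕ | ff π (k + 1) ≤ t}.Nonempty := by
    obtain ⟨k0, hk0⟩ := minCycle_mem π
    have hk0v : ff π k0 ≤ t := by
      have : ff π k0 < -lam - 2 * W := by rw [ff, hk0]; exact hA
      linarith
    have hk0pos : k0 ≠ 0 := by
      intro h0
      rw [h0, ff_zero] at hk0v
      linarith
    refine ⟨k0 - 1, ?_⟩
    show ff π (k0 - 1 + 1) ≤ t
    rw [Nat.sub_add_cancel (Nat.one_le_iff_ne_zero.mpr hk0pos)]
    exact hk0v
  have hi1 : ff π (ii W lam π + 1) ≤ t := Nat.sInf_mem hSne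
  have himin : ∀ k, ff π (k + 1) ≤ t → ii W lam π ≤ k := fun k hk => Nat.sInf_le hk
  have hfgt : ∀ k, k ≤ ii W lam π → t < ff π k := by
    intro k hk
    match k with
    | 0 => rw [ff_zero]; exact ht0
    | (m + 1) =>
      by_contra h
      push_neg at h
      have := himin m h
      omega
  have hiL : ii W lam π < LL π := by
    by_contra h
    push_neg at h
    have hper : cc π (ii W lam π + 1) = cc π (ii W lam π - LL π + 1) := by
      rw [show ii W lam π + 1 = (ii W lam π - LL π + 1) + LL π from by omega, cc_add_LL]
    have hle : ff π (ii W lam π - LL π + 1) ≤ t := by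
      rw [ff, ← hper]; exact hi1
    have := himin _ hle
    have := LL_pos π
    omega
  -- the last up-crossing within one period
  have hjne : {k : ℕ | k ≤ ii W lam π + LL π ∧ ff π k ≤ t}.Nonempty :=
    ⟨ii W lam π + 1, ⟨by have := LL_pos π; omega, hi1⟩⟩
  have hjbdd : BddAbove {k : ℕ | k ≤ ii W lam π + LL π ∧ ff π k ≤ t} :=
    ⟨ii W lam π + LL π, fun k hk => hk.1⟩
  have hj_mem := Nat.sSup_mem hjne hjbdd
  have hjle : jj W lam π ≤ ii W lam π + LL π := hj_mem.1
  have hjt : ff π (jj W lam π) ≤ t := hj_mem.2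
  have hjmax : ∀ k, k ≤ ii W lam π + LL π → ff π k ≤ t → k ≤ jj W lam π :=
    fun k h1 h2 => le_csSup hjbdd ⟨h1, h2⟩
  have hij : ii W lam π + 1 ≤ jj W lam π :=
    hjmax _ (by have := LL_pos π; omega) hi1
  have hjlt : jj W lam π < ii W lam π + LL π := by
    rcases lt_or_eq_of_le hjle with h | h
    · exact h
    · exfalso
      have : ff π (ii W lam π + LL π) = ff π (ii W lam π) := by rw [ff, ff, cc_add_LL]
      rw [h, this] at hjt
      exact absurd hjt (not_le.mpr (hfgt _ le_rfl))
  have hgt2 : ∀ k, jj W lam π < k → k ≤ ii W lam π + LL π → t < ff π k := by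
    intro k h1 h2
    by_contra h
    push_neg at h
    have := hjmax k h2 h
    omega
  have hj1 : t < ff π (jj W lam π + 1) := hgt2 _ (by omega) (by omega)
  have hjL : jj W lam π < LL π := by
    by_contra h
    push_neg at h
    have hper : cc π (jj W lam π) = cc π (jj W lam π - LL π) := by
      conv_lhs => rw [show jj W lam π = (jj W lam π - LL π) + LL π from by omega]
      exact cc_add_LL π _
    have hff : ff π (jj W lam π - LL π) ≤ t := by rw [ff, ← hper]; exact hjt
    by_cases h0 : jj W lam π - LL π = 0
    · rw [h0, ff_zero] at hff; linarith
    · have h2 : ff π ((jj W lam π - LL π - 1) + 1) ≤ t := by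
        rw [show jj W lam π - LL π - 1 + 1 = jj W lam π - LL π from by omega]
        exact hff
      have := himin _ h2
      omega
  -- value windows
  have habs_i := abs_le.mp (hstep (ii W lam π))
  have hfi_ub : ff π (ii W lam π) ≤ t + W := by linarith [habs_i.1]
  have hfi_lb : t < ff π (ii W lam π) := hfgt _ le_rfl
  have habs_j := abs_le.mp (hstep (jj W lam π))
  have hfj1_ub : ff π (jj W lam π + 1) ≤ t + W := by linarith [habs_j.2]
  have hfj_lb : t - W < ff π (jj W lam π) := by linarith [habs_j.2]
  have hfi1_lb : t - W < ff π (ii W lam π + 1) := by linarith [habs_i.2]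
  -- a ≠ b
  have hab : aa W lam π ≠ bbb W lam π := by
    intro h
    have : ff π (ii W lam π) = ff π (jj W lam π) := by
      rw [ff, ff]; exact_mod_cast congrArg (fun x : Box n => ((x : ℤ) : ℝ)) h
    linarith
  -- applications of Psi
  have hPa : Psi W lam π (aa W lam π) = cc π (jj W lam π + 1) := by
    rw [Psi, Equiv.Perm.mul_apply, Equiv.swap_apply_left, bbb, ← cc_succ]
  have hPb : Psi W lam π (bbb W lam π) = cc π (ii W lam π + 1) := by
    rw [Psi, Equiv.Perm.mul_apply, Equiv.swap_apply_right, aa, ← cc_succ]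
  have hPo : ∀ x : Box n, x ≠ aa W lam π → x ≠ bbb W lam π → Psi W lam π x = π x := by
    intro x h1 h2
    rw [Psi, Equiv.Perm.mul_apply, Equiv.swap_apply_of_ne_of_ne h1 h2]
  -- Psi ∈ SW
  have hPsiSW : Psi W lam π ∈ SW n W := by
    intro x
    by_cases hxa : x = aa W lam π
    · subst hxa
      rw [hPa]
      have hr : |ff π (jj W lam π + 1) - ff π (ii W lam π)| < (W : ℝ) :=
        abs_sub_lt_iff.mpr ⟨by linarith, by linarith⟩
      have hr' : |((cc π (jj W lam π + 1) : ℤ) : ℝ) - ((aa W lam π : ℤ) : ℝ)| < (W : ℝ) := hr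
      have hz : |((cc π (jj W lam π + 1) : ℤ)) - ((aa W lam π : ℤ))| < (W : ℤ) := by
        exact_mod_cast hr'
      exact hz.le
    · by_cases hxb : x = bbb W lam π
      · subst hxb
        rw [hPb]
        have hr : |ff π (ii W lam π + 1) - ff π (jj W lam π)| < (W : ℝ) :=
          abs_sub_lt_iff.mpr ⟨by linarith, by linarith⟩
        have hr' : |((cc π (ii W lam π + 1) : ℤ) : ℝ) - ((bbb W lam π : ℤ) : ℝ)| < (W : ℝ) := hr
        have hz : |((cc π (ii W lam π + 1) : ℤ)) - ((bbb W lam π : ℤ))| < (W : ℤ) := by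
          exact_mod_cast hr'
        exact hz.le
      · rw [hPo x hxa hxb]
        exact hSW x
  -- the orbit of 0 under Psi agrees with that of π up to time ii
  have claim1 : ∀ k, k ≤ ii W lam π → (⇑(Psi W lam π))^[k] (boxZero n) = cc π k := by
    intro k
    induction k with
    | zero => intro _; rfl
    | succ m ihm =>
      intro h
      rw [Function.iterate_succ_apply', ihm (by omega)]
      have h1 : cc π m ≠ aa W lam π := by
        intro he
        have hmod := cc_eq_of π hiL he
        rw [Nat.mod_eq_of_lt (by omega)] at hmod
        omega
      have h2 : cc π m ≠ bbb W lam π := by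
        intro he
        have hmod := cc_eq_of π hjL he
        rw [Nat.mod_eq_of_lt (by omega)] at hmod
        omega
      rw [hPo _ h1 h2, ← cc_succ]
  -- the a point lies on the Psi-orbit of 0
  have hup : ((minCycle (Psi W lam π) (boxZero n) : ℤ) : ℝ) < -lam := by
    have h1 : cc (Psi W lam π) (ii W lam π) = aa W lam π := claim1 _ le_rfl
    have h2 : minCycle (Psi W lam π) (boxZero n) ≤ (aa W lam π : ℤ) := by
      rw [← h1]; exact minCycle_le _ _
    have h3 : ((aa W lam π : ℤ) : ℝ) = ff π (ii W lam π) := rfl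
    have h4 : ((minCycle (Psi W lam π) (boxZero n) : ℤ) : ℝ) ≤ ff π (ii W lam π) := by
      rw [← h3]; exact_mod_cast h2
    rw [htdef] at hfi_ub
    linarith
  -- invariance: the Psi-orbit of 0 stays in the arc [jj+1, ii+LL]
  have hD : ∀ k : ℕ, ∃ m, jj W lam π + 1 ≤ m ∧ m ≤ ii W lam π + LL π ∧
      (⇑(Psi W lam π))^[k] (boxZero n) = cc π m := by
    intro k
    induction k with
    | zero =>
      refine ⟨LL π, by omega, by omega, ?_⟩
      rw [show LL π = 0 + LL π from by omega, cc_add_LL, cc_zero]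
      rfl
    | succ m ihm =>
      obtain ⟨m', hm1, hm2, heq⟩ := ihm
      rw [Function.iterate_succ_apply', heq]
      by_cases hxa : cc π m' = aa W lam π
      · exact ⟨jj W lam π + 1, le_rfl, by omega, by rw [hxa, hPa]⟩
      · have hxb : cc π m' ≠ bbb W lam π := by
          intro he
          have hmod := cc_eq_of π hjL he
          have hdm := Nat.div_add_mod m' (LL π)
          rcases Nat.eq_zero_or_pos (m' / LL π) with hq | hq
          · rw [hq] at hdm; simp at hdm; omega
          · have hbig : LL π ≤ LL π * (m' / LL π) := Nat.le_mul_of_pos_right _ hq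
            omega
        have hmlt : m' < ii W lam π + LL π := by
          rcases lt_or_eq_of_le hm2 with h | h
          · exact h
          · exfalso
            apply hxa
            rw [h]
            show cc π (ii W lam π + LL π) = aa W lam π
            rw [cc_add_LL]; rfl
        exact ⟨m' + 1, by omega, by omega, by rw [hPo _ hxa hxb, ← cc_succ]⟩
  have hlow : -lam - 2 * W ≤ ((minCycle (Psi W lam π) (boxZero n) : ℤ) : ℝ) := by
    obtain ⟨k, hk⟩ := minCycle_mem (Psi W lam π)
    obtain ⟨m, h1, h2, heq⟩ := hD k
    have hval : ff π m = ((minCycle (Psi W lam π) (boxZero n) : ℤ) : ℝ) := by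
      rw [← hk]
      show ((cc π m : ℤ) : ℝ) = ((cc (Psi W lam π) k : ℤ) : ℝ)
      rw [show cc (Psi W lam π) k = cc π m from heq]
    have hgt := hgt2 m (by omega) h2
    linarith
  -- window membership
  have hwa : (aa W lam π : ℤ) ∈ Finset.Ioc ⌊t⌋ (⌊t⌋ + W) := by
    rw [Finset.mem_Ioc]
    constructor
    · exact Int.floor_lt.mpr hfi_lb
    · have : (aa W lam π : ℤ) - W ≤ ⌊t⌋ := by
        apply Int.le_floor.mpr
        push_cast
        have h3 : ((aa W lam π : ℤ) : ℝ) = ff π (ii W lam π) := rfl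
        rw [h3]
        linarith
      omega
  have hwb : (bbb W lam π : ℤ) ∈ Finset.Ioc (⌊t⌋ - W) ⌊t⌋ := by
    rw [Finset.mem_Ioc]
    have h3 : ((bbb W lam π : ℤ) : ℝ) = ff π (jj W lam π) := rfl
    constructor
    · have : ⌊t⌋ < (bbb W lam π : ℤ) + W := by
        apply Int.floor_lt.mpr
        push_cast
        rw [h3]
        linarith
      omega
    · apply Int.le_floor.mpr
      rw [h3]
      exact hjt
  exact ⟨hPsiSW, ⟨hlow, hup⟩, hwa, hwb⟩

lemma psi_invol (W : ℕ) (lam : ℝ) (π : Equiv.Perm (Box n)) :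
    Psi W lam π * Equiv.swap (aa W lam π) (bbb W lam π) = π := by
  rw [Psi, mul_assoc, Equiv.swap_mul_self, mul_one]

end OneStepAux


open OneStepAux in
open scoped Classical in
lemma OneStepAux.card_key (n W : ℕ) (hW : 1 ≤ W) (lam : ℝ) (hlam : 0 ≤ lam) :
    (Finset.univ.filter fun π : Equiv.Perm (Box n) => π ∈ SW n W ∧
      π ∈ {π : Equiv.Perm (Box n) | ((minCycle π (boxZero n) : ℤ) : ℝ) < -lam - 2 * W}).card ≤
    W ^ 2 * (Finset.univ.filter fun π : Equiv.Perm (Box n) => π ∈ SW n W ∧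
      π ∈ {π : Equiv.Perm (Box n) | -lam - 2 * W ≤ ((minCycle π (boxZero n) : ℤ) : ℝ) ∧
        ((minCycle π (boxZero n) : ℤ) : ℝ) < -lam}).card := by
  set t : ℝ := -lam - (W : ℝ) - 1 with htdef
  refine le_trans (Finset.card_le_card_of_injOn
      (fun π => (Psi W lam π, ((aa W lam π : ℤ), (bbb W lam π : ℤ))))
      (t := (Finset.univ.filter fun π : Equiv.Perm (Box n) => π ∈ SW n W ∧
        π ∈ {π : Equiv.Perm (Box n) | -lam - 2 * W ≤ ((minCycle π (boxZero n) : ℤ) : ℝ) ∧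
          ((minCycle π (boxZero n) : ℤ) : ℝ) < -lam}) ×ˢ
        (Finset.Ioc ⌊t⌋ (⌊t⌋ + W) ×ˢ Finset.Ioc (⌊t⌋ - W) ⌊t⌋))
      ?_ ?_) ?_
  · intro π hπ
    rw [Finset.mem_coe, Finset.mem_filter] at hπ
    obtain ⟨-, hSW, hA⟩ := hπ
    obtain ⟨h1, h2, h3, h4⟩ := OneStepAux.main W hW lam hlam π hSW hA
    rw [Finset.mem_coe, Finset.mem_product]
    refine ⟨?_, ?_⟩
    · rw [Finset.mem_filter]
      exact ⟨Finset.mem_univ _, h1, h2⟩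
    · rw [Finset.mem_product]
      exact ⟨h3, h4⟩
  · intro π1 h1 π2 h2 heq
    rw [Prod.mk.injEq, Prod.mk.injEq] at heq
    obtain ⟨e1, e2, e3⟩ := heq
    have ea : aa W lam π1 = aa W lam π2 := Subtype.ext e2
    have eb : bbb W lam π1 = bbb W lam π2 := Subtype.ext e3
    calc π1 = Psi W lam π1 * Equiv.swap (aa W lam π1) (bbb W lam π1) :=
            (psi_invol W lam π1).symm
      _ = Psi W lam π2 * Equiv.swap (aa W lam π2) (bbb W lam π2) := by rw [e1, ea, eb]
      _ = π2 := psi_invol W lam π2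
  · rw [Finset.card_product, Finset.card_product, Int.card_Ioc, Int.card_Ioc]
    have hc1 : (⌊t⌋ + W - ⌊t⌋).toNat = W := by omega
    have hc2 : (⌊t⌋ - (⌊t⌋ - W)).toNat = W := by omega
    rw [hc1, hc2, pow_two]
    exact le_of_eq (by ring)

/-- There is a universal constant `C > 0` such that for all integers
`n, W ≥ 1` and every real `λ ≥ 0`,
`P_{∞,W,n}(min C_π(0) < -λ - 2W) ≤ C W² P_{∞,W,n}(min C_π(0) ∈ [-λ - 2W, -λ))`. -/
theorem one_step_min_uniform :
    ∃ C : ℝ, 0 < C ∧ ∀ (n W : ℕ), 1 ≤ n → 1 ≤ W → ∀ lam : ℝ, 0 ≤ lam →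
      unifProb W n {π | ((minCycle π (boxZero n) : ℤ) : ℝ) < -lam - 2 * W} ≤
        C * W ^ 2 *
          unifProb W n {π | -lam - 2 * W ≤ ((minCycle π (boxZero n) : ℤ) : ℝ) ∧
            ((minCycle π (boxZero n) : ℤ) : ℝ) < -lam} := by
  classical
  refine ⟨1, one_pos, fun n W hn hW lam hlam => ?_⟩
  rw [unifProb, unifProb]
  have hDpos : 0 < ((Finset.univ.filter fun π : Equiv.Perm (Box n) => π ∈ SW n W).card : ℝ) := by
    have h1 : (1 : Equiv.Perm (Box n)) ∈
        Finset.univ.filter fun π : Equiv.Perm (Box n) => π ∈ SW n W := by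
      rw [Finset.mem_filter]
      refine ⟨Finset.mem_univ _, fun i => ?_⟩
      simp
    have := Finset.card_pos.mpr ⟨_, h1⟩
    exact_mod_cast this
  have hcardR : ((Finset.univ.filter fun π : Equiv.Perm (Box n) => π ∈ SW n W ∧
      π ∈ {π : Equiv.Perm (Box n) | ((minCycle π (boxZero n) : ℤ) : ℝ) < -lam - 2 * W}).card : ℝ) ≤
      (W : ℝ) ^ 2 * ((Finset.univ.filter fun π : Equiv.Perm (Box n) => π ∈ SW n W ∧
      π ∈ {π : Equiv.Perm (Box n) | -lam - 2 * W ≤ ((minCycle π (boxZero n) : ℤ) : ℝ) ∧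
        ((minCycle π (boxZero n) : ℤ) : ℝ) < -lam}).card : ℝ) := by
    exact_mod_cast OneStepAux.card_key n W hW lam hlam
  calc _ ≤ ((W : ℝ) ^ 2 * ((Finset.univ.filter fun π : Equiv.Perm (Box n) => π ∈ SW n W ∧
        π ∈ {π : Equiv.Perm (Box n) | -lam - 2 * W ≤ ((minCycle π (boxZero n) : ℤ) : ℝ) ∧
          ((minCycle π (boxZero n) : ℤ) : ℝ) < -lam}).card : ℝ)) /
        ((Finset.univ.filter fun π : Equiv.Perm (Box n) => π ∈ SW n W).card : ℝ) :=
      (div_le_div_iff_of_pos_right hDpos).mpr hcardR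
    _ = _ := by ring
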